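/- Let F be the free group on a free generating set A with |A| = d ≥ 2, and let S be a finite symmetric generating set of F with A ⊆ S. Let M = max_{s ∈ S} |s|_A. Let a ∈ A ∪ A⁻¹, and suppose g, y ∈ F are such that the reduced word of g ends with the letter a⁻¹, the reduced word of y does not begin with the letter a, and |y|_A ≥ (2M+1)·M. Then |gy|_S ≥ |g|_S + 1. -/

import Mathlib

open Filter Topology

section Defs

variable {G : Type*}

/-- `d` is a metric on `X` (nonnegative, vanishing exactly on the diagonal,
symmetric, triangle inequality). -/
def IsMetric {X : Type*} (d : X → X → ℝ) : Prop :=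
  (∀ x y, 0 ≤ d x y) ∧ (∀ x y, d x y = 0 ↔ x = y) ∧ (∀ x y, d x y = d y x) ∧
    (∀ x y z, d x z ≤ d x y + d y z)

/-- The Busemann function of `x` with base point `1`: `b_x(y) = d(x,y) - d(x,1)`. -/
def bus [Group G] (d : G → G → ℝ) (x y : G) : ℝ := d x y - d x 1

/-- `h` belongs to the metric-functional boundary `∂(G,d)`: it is a pointwise
limit of Busemann functions and is not itself a Busemann function. -/
def InBoundary [Group G] (d : G → G → ℝ) (h : G → ℝ) : Prop :=
  (∃ u : ℕ → G, ∀ y : G, Tendsto (fun n => bus d (u n) y) atTop (𝓝 (h y))) ∧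
    ∀ x : G, h ≠ bus d x

/-- The action of `x ∈ G` on functions: `(x.h)(y) = h(x⁻¹y) - h(x⁻¹)`. -/
def act [Group G] (x : G) (h : G → ℝ) : G → ℝ := fun y => h (x⁻¹ * y) - h x⁻¹

/-- `S` is a finite symmetric generating set of `G`. -/
def FinSymGen [Group G] (S : Set G) : Prop :=
  S.Finite ∧ (∀ s ∈ S, s⁻¹ ∈ S) ∧ Subgroup.closure S = ⊤

/-- The word length of `x` with respect to `S`: the least `n` such that `x`
is a product of `n` elements of `S`. -/
noncomputable def wordLength [Group G] (S : Set G) (x : G) : ℕ :=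
  sInf {n : ℕ | ∃ l : List G, (∀ s ∈ l, s ∈ S) ∧ l.length = n ∧ l.prod = x}

/-- The word metric with respect to `S` : `d_S(x,y) = |x⁻¹y|_S`. -/
noncomputable def wordDist [Group G] (S : Set G) (x y : G) : ℝ :=
  (wordLength S (x⁻¹ * y) : ℝ)

/-- `(G,d)` is quasi-isometric to a Cayley graph of `G`. -/
def QIToCayley [Group G] (d : G → G → ℝ) : Prop :=
  ∃ S : Set G, FinSymGen S ∧ ∃ φ : G → G, ∃ C : ℝ, 0 < C ∧
    (∀ y : G, ∃ x : G, wordDist S (φ x) y ≤ C) ∧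
    ∀ x y : G, C⁻¹ * d x y - C ≤ wordDist S (φ x) (φ y) ∧
      wordDist S (φ x) (φ y) ≤ C * d x y + C

/-- A Banach metric on `G`: an integer-valued, left-invariant, proper metric,
quasi-isometric to a Cayley graph, all of whose metric functionals are unbounded. -/
def IsBanachMetric [Group G] (d : G → G → ℝ) : Prop :=
  IsMetric d ∧
  (∀ x y : G, ∃ n : ℕ, d x y = n) ∧
  (∀ x y z : G, d (z * x) (z * y) = d x y) ∧
  (∀ r : ℝ, {x : G | d x 1 ≤ r}.Finite) ∧
  QIToCayley d ∧
  ∀ h : G → ℝ, InBoundary d h → ¬ ∃ B : ℝ, ∀ x : G, |h x| ≤ B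

/-- A virtual homomorphism on `G`: a function `φ : G → ℤ` restricting to a
nontrivial homomorphism on some finite index subgroup. -/
def IsVirtualHom [Group G] (φ : G → ℤ) : Prop :=
  ∃ H : Subgroup G, H.FiniteIndex ∧
    (∀ a b : G, a ∈ H → b ∈ H → φ (a * b) = φ a + φ b) ∧
    ∃ a ∈ H, φ a ≠ 0

end Defs

section Aux
variable {α : Type*} [DecidableEq α]

/-- reducedness predicate -/
def IsRedW (L : List (α × Bool)) : Prop :=
  List.Chain' (fun p q => ¬(p.1 = q.1 ∧ p.2 = !q.2)) L

theorem isRedW_reduce (L : List (α × Bool)) : IsRedW (FreeGroup.reduce L) := by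
  induction L with
  | nil => exact List.isChain_nil
  | cons a L ih =>
    rw [FreeGroup.reduce.cons]
    rcases h : FreeGroup.reduce L with _ | ⟨hd, tl⟩
    · exact List.isChain_singleton a
    · rw [h] at ih
      by_cases hc : a.1 = hd.1 ∧ a.2 = !hd.2
      · simp only [hc, if_true]
        exact ih.tail
      · simp only [hc, if_false]
        exact ih.cons (fun y hy => by simp only [List.head?_cons, Option.mem_def, Option.some.injEq] at hy; subst hy; exact hc)

theorem reduce_eq_self_of_isRedW {L : List (α × Bool)} (h : IsRedW L) :
    FreeGroup.reduce L = L := by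
  induction L with
  | nil => rfl
  | cons a L ih =>
    have hL : IsRedW L := h.tail
    rw [FreeGroup.reduce.cons, ih hL]
    rcases hL' : L with _ | ⟨hd, tl⟩
    · rfl
    · have : ¬(a.1 = hd.1 ∧ a.2 = !hd.2) := by
        rw [hL'] at h; exact List.isChain_cons_cons.mp h |>.1
      simp [this]

theorem isRedW_toWord (x : FreeGroup α) : IsRedW (FreeGroup.toWord x) := by
  rw [← FreeGroup.reduce_toWord]; exact isRedW_reduce _

theorem toWord_mk_of_isRedW {L : List (α × Bool)} (h : IsRedW L) :
    FreeGroup.toWord (FreeGroup.mk L) = L := by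
  rw [FreeGroup.toWord_mk, reduce_eq_self_of_isRedW h]

theorem isRedW_invRev {L : List (α × Bool)} (h : IsRedW L) : IsRedW (FreeGroup.invRev L) := by
  have : FreeGroup.reduce (FreeGroup.invRev L) = FreeGroup.invRev L := by
    rw [FreeGroup.reduce_invRev, reduce_eq_self_of_isRedW h]
  rw [← this]; exact isRedW_reduce _

theorem invRev_getLast? (a : α × Bool) (t : List (α × Bool)) :
    (FreeGroup.invRev (a :: t)).getLast? = some (a.1, !a.2) := by
  unfold FreeGroup.invRev
  rw [List.getLast?_reverse]
  rfl


theorem key_decomp : ∀ (L₁ L₂ : List (α × Bool)), IsRedW L₁ → IsRedW L₂ →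
    ∃ p s s' : List (α × Bool), L₁ = p ++ s ∧ L₂ = p ++ s' ∧
      FreeGroup.toWord ((FreeGroup.mk L₁)⁻¹ * FreeGroup.mk L₂) = FreeGroup.invRev s ++ s' := by
  intro L₁
  induction L₁ with
  | nil =>
    intro L₂ _ h₂
    refine ⟨[], [], L₂, rfl, rfl, ?_⟩
    rw [← FreeGroup.one_eq_mk, inv_one, one_mul, toWord_mk_of_isRedW h₂]
    rfl
  | cons a t₁ ih =>
    intro L₂ h₁ h₂
    rcases L₂ with _ | ⟨a', t₂⟩
    · refine ⟨[], a :: t₁, [], rfl, rfl, ?_⟩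
      rw [← FreeGroup.one_eq_mk, mul_one, FreeGroup.toWord_inv,
        toWord_mk_of_isRedW h₁, List.append_nil]
    · by_cases haa : a = a'
      · subst haa
        obtain ⟨p, s, s', e1, e2, e3⟩ := ih t₂ (List.IsChain.tail h₁) (List.IsChain.tail h₂)
        refine ⟨a :: p, s, s', by rw [List.cons_append, e1], by rw [List.cons_append, e2], ?_⟩
        have hgrp : (FreeGroup.mk (a :: t₁))⁻¹ * FreeGroup.mk (a :: t₂)
            = (FreeGroup.mk t₁)⁻¹ * FreeGroup.mk t₂ := by
          have e : ∀ t : List (α × Bool), FreeGroup.mk (a :: t) = FreeGroup.mk [a] * FreeGroup.mk t := by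
            intro t; rw [FreeGroup.mul_mk]; rfl
          rw [e t₁, e t₂, mul_inv_rev]
          group
        rw [hgrp, e3]
      · refine ⟨[], a :: t₁, a' :: t₂, rfl, rfl, ?_⟩
        rw [FreeGroup.inv_mk, FreeGroup.mul_mk, FreeGroup.toWord_mk]
        apply reduce_eq_self_of_isRedW
        apply List.IsChain.append (isRedW_invRev h₁) h₂
        intro x hx y hy
        rw [invRev_getLast? a t₁] at hx
        simp only [List.head?_cons, Option.mem_def, Option.some.injEq] at hx hy
        subst hx; subst hy
        rintro ⟨u1, u2⟩
        exact haa (Prod.ext u1 (Bool.not_inj u2))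

noncomputable def gp (u v : FreeGroup α) : ℤ :=
  (FreeGroup.norm u : ℤ) + FreeGroup.norm v - FreeGroup.norm (u⁻¹ * v)

theorem gp_comm (u v : FreeGroup α) : gp u v = gp v u := by
  unfold gp
  have : (u⁻¹ * v)⁻¹ = v⁻¹ * u := by group
  rw [← FreeGroup.norm_inv_eq (x := u⁻¹ * v), this]
  ring

theorem gp_decomp (u v : FreeGroup α) : ∃ p s s' : List (α × Bool),
    FreeGroup.toWord u = p ++ s ∧ FreeGroup.toWord v = p ++ s' ∧ gp u v = 2 * p.length := by
  obtain ⟨p, s, s', h1, h2, h3⟩ := key_decomp (FreeGroup.toWord u) (FreeGroup.toWord v)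
    (isRedW_toWord u) (isRedW_toWord v)
  rw [FreeGroup.mk_toWord, FreeGroup.mk_toWord] at h3
  refine ⟨p, s, s', h1, h2, ?_⟩
  unfold gp
  rw [show FreeGroup.norm u = (FreeGroup.toWord u).length from rfl,
    show FreeGroup.norm v = (FreeGroup.toWord v).length from rfl,
    show FreeGroup.norm (u⁻¹ * v) = (FreeGroup.toWord (u⁻¹*v)).length from rfl,
    h1, h2, h3]
  simp [FreeGroup.invRev_length]
  push_cast
  ring

theorem norm_le_of_commonPrefix {u w : FreeGroup α} {q a b : List (α × Bool)}
    (hu : FreeGroup.toWord u = q ++ a) (hw : FreeGroup.toWord w = q ++ b) :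
    (FreeGroup.norm (u⁻¹ * w) : ℤ) ≤ a.length + b.length := by
  have eu : u = FreeGroup.mk q * FreeGroup.mk a := by
    rw [FreeGroup.mul_mk, ← hu, FreeGroup.mk_toWord]
  have ew : w = FreeGroup.mk q * FreeGroup.mk b := by
    rw [FreeGroup.mul_mk, ← hw, FreeGroup.mk_toWord]
  have : u⁻¹ * w = FreeGroup.mk (FreeGroup.invRev a ++ b) := by
    rw [eu, ew, ← FreeGroup.mul_mk, ← FreeGroup.inv_mk, mul_inv_rev]
    group
  rw [this]
  calc ((FreeGroup.norm (FreeGroup.mk (FreeGroup.invRev a ++ b)) : ℤ))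
      ≤ ((FreeGroup.invRev a ++ b).length : ℤ) := by exact_mod_cast FreeGroup.norm_mk_le
    _ = a.length + b.length := by simp [FreeGroup.invRev_length]

theorem gp_min_le (u v w : FreeGroup α) : min (gp v u) (gp v w) ≤ gp u w := by
  obtain ⟨p₁, s₁, s₁', e1, e2, e3⟩ := gp_decomp v u
  obtain ⟨p₂, s₂, s₂', f1, f2, f3⟩ := gp_decomp v w
  have hp₁ : p₁ <+: FreeGroup.toWord v := ⟨s₁, e1.symm⟩
  have hp₂ : p₂ <+: FreeGroup.toWord v := ⟨s₂, f1.symm⟩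
  rcases le_total p₁.length p₂.length with hle | hle
  · obtain ⟨r, hr⟩ := List.prefix_of_prefix_length_le hp₁ hp₂ hle
    have hw : FreeGroup.toWord w = p₁ ++ (r ++ s₂') := by rw [f2, ← hr, List.append_assoc]
    have hb := norm_le_of_commonPrefix e2 hw
    have hgpuw : 2 * (p₁.length : ℤ) ≤ gp u w := by
      unfold gp
      rw [show FreeGroup.norm u = (FreeGroup.toWord u).length from rfl,
        show FreeGroup.norm w = (FreeGroup.toWord w).length from rfl, e2, hw]
      simp only [List.length_append]
      push_cast
      simp only [List.length_append, Nat.cast_add] at hb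
      linarith
    calc min (gp v u) (gp v w) ≤ gp v u := min_le_left _ _
      _ = 2 * (p₁.length : ℤ) := e3
      _ ≤ gp u w := hgpuw
  · obtain ⟨r, hr⟩ := List.prefix_of_prefix_length_le hp₂ hp₁ hle
    have hu : FreeGroup.toWord u = p₂ ++ (r ++ s₁') := by rw [e2, ← hr, List.append_assoc]
    have hb := norm_le_of_commonPrefix hu f2
    have hgpuw : 2 * (p₂.length : ℤ) ≤ gp u w := by
      unfold gp
      rw [show FreeGroup.norm u = (FreeGroup.toWord u).length from rfl,
        show FreeGroup.norm w = (FreeGroup.toWord w).length from rfl, hu, f2]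
      simp only [List.length_append]
      push_cast
      simp only [List.length_append, Nat.cast_add] at hb
      linarith
    calc min (gp v u) (gp v w) ≤ gp v w := min_le_right _ _
      _ = 2 * (p₂.length : ℤ) := f3
      _ ≤ gp u w := hgpuw

end Aux

section WL
variable {G : Type*} [Group G] {S : Set G}

theorem wordLength_le' {l : List G} {x : G} (hl : ∀ s ∈ l, s ∈ S) (hp : l.prod = x) :
    wordLength S x ≤ l.length :=
  Nat.sInf_le ⟨l, hl, rfl, hp⟩

theorem exists_word (hS : FinSymGen S) (x : G) :
    ∃ l : List G, (∀ s ∈ l, s ∈ S) ∧ l.length = wordLength S x ∧ l.prod = x := by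
  have hx : x ∈ Subgroup.closure S := by rw [hS.2.2]; trivial
  rw [← Subgroup.mem_toSubmonoid, Subgroup.closure_toSubmonoid] at hx
  obtain ⟨l, hl, hp⟩ := Submonoid.exists_list_of_mem_closure hx
  have hl' : ∀ s ∈ l, s ∈ S := by
    intro s hs
    rcases hl s hs with h | h
    · exact h
    · have := hS.2.1 s⁻¹ (Set.mem_inv.mp h)
      rwa [inv_inv] at this
  have hne : {n : ℕ | ∃ l : List G, (∀ s ∈ l, s ∈ S) ∧ l.length = n ∧ l.prod = x}.Nonempty :=
    ⟨l.length, l, hl', rfl, hp⟩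
  obtain ⟨l', h1, h2, h3⟩ := Nat.sInf_mem hne
  exact ⟨l', h1, h2, h3⟩

theorem wordLength_mul_le' (hS : FinSymGen S) (x y : G) :
    wordLength S (x * y) ≤ wordLength S x + wordLength S y := by
  obtain ⟨l₁, h1, h2, h3⟩ := exists_word hS x
  obtain ⟨l₂, g1, g2, g3⟩ := exists_word hS y
  have := wordLength_le' (l := l₁ ++ l₂) (x := x * y)
    (by intro s hs; rcases List.mem_append.mp hs with h | h; exacts [h1 s h, g1 s h])
    (by rw [List.prod_append, h3, g3])
  rwa [List.length_append, h2, g2] at this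

end WL

section FG
variable {α : Type*} [DecidableEq α]

theorem prod_map_mk (L : List (α × Bool)) :
    (L.map (fun p => if p.2 then FreeGroup.of p.1 else (FreeGroup.of p.1)⁻¹)).prod
      = FreeGroup.mk L := by
  induction L with
  | nil => rw [List.map_nil, List.prod_nil, FreeGroup.one_eq_mk]
  | cons p L ih =>
    rw [List.map_cons, List.prod_cons, ih,
      show (p :: L) = [p] ++ L from rfl, ← FreeGroup.mul_mk]
    congr 1
    rcases p with ⟨a, _ | _⟩
    · rw [if_neg (by simp)]
      rw [show FreeGroup.of a = FreeGroup.mk [(a, true)] from rfl, FreeGroup.inv_mk]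
      rfl
    · rw [if_pos rfl]; rfl

theorem wordLength_le_norm {S : Set (FreeGroup α)} (hS : FinSymGen S)
    (hA : ∀ i : α, FreeGroup.of i ∈ S) (z : FreeGroup α) :
    wordLength S z ≤ FreeGroup.norm z := by
  have := wordLength_le' (S := S)
    (l := (FreeGroup.toWord z).map (fun p => if p.2 then FreeGroup.of p.1 else (FreeGroup.of p.1)⁻¹))
    (x := z) ?_ ?_
  · rwa [List.length_map] at this
  · intro s hs
    simp only [List.mem_map] at hs
    obtain ⟨p, _, rfl⟩ := hs
    rcases p with ⟨a, _ | _⟩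
    · simpa using hS.2.1 _ (hA a)
    · simpa using hA a
  · rw [prod_map_mk, FreeGroup.mk_toWord]

theorem normProdLe (M : ℕ) (l : List (FreeGroup α)) (h : ∀ s ∈ l, FreeGroup.norm s ≤ M) :
    FreeGroup.norm l.prod ≤ M * l.length := by
  induction l with
  | nil => simp [FreeGroup.norm_one]
  | cons a l ih =>
    rw [List.prod_cons, List.length_cons]
    calc FreeGroup.norm (a * l.prod) ≤ FreeGroup.norm a + FreeGroup.norm l.prod :=
          FreeGroup.norm_mul_le _ _
      _ ≤ M + M * l.length := by
          exact Nat.add_le_add (h a (List.mem_cons_self)) (ih fun s hs => h s (List.mem_cons_of_mem a hs))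
      _ = M * (l.length + 1) := by ring

end FG

/-- In the free group on `A` (`|A| = d ≥ 2`) with a finite
symmetric generating set `S ⊇ A` and `M = max_{s ∈ S} |s|_A`: if the reduced
word of `g` ends with `a⁻¹`, the reduced word of `y` does not begin with `a`,
and `|y|_A ≥ (2M+1)M`, then `|gy|_S ≥ |g|_S + 1`.
(A letter `a ∈ A ∪ A⁻¹` is encoded as a pair `(i, b) : α × Bool`, with
`(i, true)` standing for the generator `of i` and `(i, false)` for its inverse,
matching `FreeGroup.toWord`; thus `a⁻¹` is `(i, !b)`.) -/
theorem freeGroup_wordLength_add_one_le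
    {α : Type*} [DecidableEq α] {d : ℕ} (hd : 2 ≤ d) (hcard : Nat.card α = d)
    (S : Set (FreeGroup α)) (hS : FinSymGen S)
    (hA : ∀ i : α, FreeGroup.of i ∈ S)
    (M : ℕ) (hM : ∀ s ∈ S, (FreeGroup.toWord s).length ≤ M)
    (hM' : ∃ s ∈ S, (FreeGroup.toWord s).length = M)
    (i : α) (b : Bool) (g y : FreeGroup α)
    (hg : (FreeGroup.toWord g).getLast? = some (i, !b))
    (hy : ∀ p ∈ (FreeGroup.toWord y).head?, p ≠ (i, b))
    (hlen : (2 * M + 1) * M ≤ (FreeGroup.toWord y).length) :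
    wordLength S g + 1 ≤ wordLength S (g * y) := by
  classical
  -- `M ≥ 1`
  have hα : Nonempty α := by
    have : Nat.card α ≠ 0 := by omega
    exact (Nat.card_ne_zero.mp this).1
  obtain ⟨i₀⟩ := hα
  have hM1 : 1 ≤ M := by
    have := hM _ (hA i₀)
    rwa [FreeGroup.toWord_of, List.length_singleton] at this
  -- the product `g * y` is a reduced concatenation
  have hred : FreeGroup.toWord (g * y) = FreeGroup.toWord g ++ FreeGroup.toWord y := by
    have hmul : g * y = FreeGroup.mk (FreeGroup.toWord g ++ FreeGroup.toWord y) := by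
      rw [← FreeGroup.mul_mk, FreeGroup.mk_toWord, FreeGroup.mk_toWord]
    rw [hmul, FreeGroup.toWord_mk]
    apply reduce_eq_self_of_isRedW
    apply List.IsChain.append (isRedW_toWord g) (isRedW_toWord y)
    intro p hp q hq
    rw [hg] at hp
    simp only [Option.mem_def, Option.some.injEq] at hp
    subst hp
    rintro ⟨h1, h2⟩
    exact hy q hq (by
      rcases q with ⟨q1, q2⟩
      simp only at h1 h2
      rw [← h1, Bool.not_inj h2.symm]
      )
  -- notation
  set G : ℤ := (FreeGroup.norm g : ℤ) with hGdef
  set Y : ℤ := (FreeGroup.norm y : ℤ) with hYdef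
  have hGY : (FreeGroup.norm (g * y) : ℤ) = G + Y := by
    rw [hGdef, hYdef]
    have : FreeGroup.norm (g * y) = FreeGroup.norm g + FreeGroup.norm y := by
      unfold FreeGroup.norm
      rw [hred, List.length_append]
    exact_mod_cast this
  have hG1 : 1 ≤ G := by
    have : FreeGroup.toWord g ≠ [] := by
      intro h; rw [h] at hg; simp at hg
    have h1 : 1 ≤ FreeGroup.norm g := List.length_pos_iff.mpr this
    rw [hGdef]
    exact_mod_cast h1
  have hY : ((2 * M + 1) * M : ℤ) ≤ Y := by rw [hYdef]; exact_mod_cast hlen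
  -- geodesic word for `g * y`
  obtain ⟨l, hlS, hlen_l, hlprod⟩ := exists_word hS (g * y)
  set n := l.length with hn
  -- path and Gromov products with `g * y`
  set x : ℕ → FreeGroup α := fun j => (l.take j).prod with hx
  set T : ℕ → ℤ := fun j => gp (x j) (g * y) with hT
  have hT0 : T 0 = 0 := by
    simp only [hT, hx, List.take_zero, List.prod_nil, gp]
    rw [inv_one, one_mul, FreeGroup.norm_one]
    ring
  have hxn : x n = g * y := by
    simp only [hx, hn, List.take_length, hlprod]
  have hTn : T n = 2 * (G + Y) := by
    simp only [hT, gp, hxn, hGY]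
    rw [inv_mul_cancel, FreeGroup.norm_one]
    push_cast
    ring
  -- choose the last time the Gromov product is `< 2G`
  set P : ℕ → Prop := fun j => T j < 2 * G with hP
  have hP0 : P 0 := by rw [hP]; simp only [hT0]; linarith
  have hPn : ¬ P n := by rw [hP]; simp only [hTn]; intro h; linarith [hY, hM1, mul_pos (by linarith : (0:ℤ) < 2*M+1) (by exact_mod_cast hM1 : (1:ℤ) ≤ M)]
  set k := Nat.findGreatest P n with hk
  have hkP : P k := Nat.findGreatest_spec (Nat.zero_le n) hP0
  have hkn : k < n := by
    rcases Nat.lt_or_ge k n with h | h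
    · exact h
    · exact absurd (le_antisymm (Nat.findGreatest_le n) h ▸ hkP) hPn
  have hk1 : ¬ P (k + 1) := Nat.findGreatest_is_greatest (Nat.lt_succ_self k) hkn
  have hTk : T k < 2 * G := hkP
  have hTk1 : 2 * G ≤ T (k + 1) := not_lt.mp hk1
  -- the step `s`
  have hkl : k < l.length := by rw [← hn]; exact hkn
  set s : FreeGroup α := l.get ⟨k, hkl⟩ with hs
  have hsS : s ∈ S := hlS _ (l.get_mem ⟨k, hkl⟩)
  have hsM : (FreeGroup.norm s : ℤ) ≤ M := by exact_mod_cast hM s hsS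
  have hstep : x (k + 1) = x k * s := by
    simp only [hx, hs]
    exact List.prod_take_succ l k hkl
  set X : FreeGroup α := x (k + 1) with hX
  set N : ℤ := (FreeGroup.norm X : ℤ) with hN
  set E : ℤ := (FreeGroup.norm (X⁻¹ * (g * y)) : ℤ) with hE
  have hTk1eq : T (k + 1) = N + (G + Y) - E := by
    simp only [hT, gp, ← hX, ← hN, ← hE, hGY]
  -- single step bound : `T (k+1) ≤ T k + 2M`
  have hNk : N ≤ (FreeGroup.norm (x k) : ℤ) + M := by
    rw [hN, hstep]
    calc (FreeGroup.norm (x k * s) : ℤ) ≤ FreeGroup.norm (x k) + FreeGroup.norm s := by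
          exact_mod_cast FreeGroup.norm_mul_le _ _
      _ ≤ FreeGroup.norm (x k) + M := by linarith
  have hEk : (FreeGroup.norm ((x k)⁻¹ * (g * y)) : ℤ) ≤ M + E := by
    have : (x k)⁻¹ * (g * y) = s * (X⁻¹ * (g * y)) := by
      rw [hstep]; group
    rw [this]
    calc (FreeGroup.norm (s * (X⁻¹ * (g * y))) : ℤ)
        ≤ FreeGroup.norm s + FreeGroup.norm (X⁻¹ * (g * y)) := by
          exact_mod_cast FreeGroup.norm_mul_le _ _
      _ ≤ M + E := by rw [← hE]; linarith
  have hstepT : T (k + 1) ≤ T k + 2 * M := by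
    have hTkeq : T k = (FreeGroup.norm (x k) : ℤ) + (G + Y)
        - FreeGroup.norm ((x k)⁻¹ * (g * y)) := by
      simp only [hT, gp, hGY]
    rw [hTk1eq, hTkeq]
    linarith
  have ht_ub : T (k + 1) ≤ 2 * G + 2 * M - 1 := by linarith
  -- hyperbolicity I : `2N - T(k+1) ≤ 2M`
  have hgpXxk : gp X (x k) ≤ T k := by
    have hmin := gp_min_le (x k) X (g * y)
    have hXgy : gp X (g * y) = T (k + 1) := rfl
    rcases min_le_iff.mp (le_of_eq (rfl : min (gp X (x k)) (gp X (g * y)) = _)) with _ | _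
    all_goals
      rcases le_total (gp X (x k)) (gp X (g * y)) with hc | hc
      · rwa [min_eq_left hc] at hmin
      · rw [min_eq_right hc] at hmin
        rw [hXgy] at hmin
        linarith
  have hXxk : X⁻¹ * x k = s⁻¹ := by rw [hstep]; group
  have h2NT : 2 * N - T (k + 1) ≤ 2 * M := by
    have h1 : gp X (x k) = N + FreeGroup.norm (x k) - FreeGroup.norm (X⁻¹ * x k) := rfl
    have h2 : (FreeGroup.norm (X⁻¹ * x k) : ℤ) ≤ M := by
      rw [hXxk]
      calc ((FreeGroup.norm s⁻¹ : ℕ) : ℤ) = FreeGroup.norm s := by rw [FreeGroup.norm_inv_eq]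
        _ ≤ M := hsM
    have h3 : (FreeGroup.norm (x k) : ℤ) ≥ N - M := by linarith
    have h4 : gp X (x k) ≥ 2 * N - 2 * M := by rw [h1]; linarith
    linarith
  -- hyperbolicity II : `norm (X⁻¹ g) ≤ N - G`
  have hgp_g : gp (g * y) g = 2 * G := by
    have : (g * y)⁻¹ * g = y⁻¹ := by group
    rw [gp, this, FreeGroup.norm_inv_eq, hGY, ← hYdef, ← hGdef]
    ring
  have hXg : (FreeGroup.norm (X⁻¹ * g) : ℤ) ≤ N - G := by
    have hmin := gp_min_le X (g * y) g
    have h1 : gp (g * y) X = T (k + 1) := by rw [gp_comm]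
    have h2 : 2 * G ≤ gp X g := by
      rw [h1, hgp_g] at hmin
      rcases le_total (T (k + 1)) (2 * G) with hc | hc
      · rwa [min_eq_left hc, (by linarith : T (k+1) = 2*G)] at hmin
      · rwa [min_eq_right hc] at hmin
    have h3 : gp X g = N + G - FreeGroup.norm (X⁻¹ * g) := rfl
    linarith
  -- remaining path bound : `E ≤ M * (n - k - 1)`
  have hdrop : X⁻¹ * (g * y) = (l.drop (k + 1)).prod := by
    have := List.prod_take_mul_prod_drop l (k + 1)
    rw [hlprod] at this
    rw [hX, hx, ← this]
    group
  have hEbound : E ≤ (M : ℤ) * ((n : ℤ) - k - 1) := by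
    have h1 : FreeGroup.norm ((l.drop (k + 1)).prod) ≤ M * (l.drop (k + 1)).length :=
      normProdLe M _ (fun t ht => hM t (hlS t (List.mem_of_mem_drop ht)))
    have h2 : (l.drop (k + 1)).length = n - (k + 1) := by rw [List.length_drop, hn]
    rw [hE, hdrop]
    calc (FreeGroup.norm ((l.drop (k+1)).prod) : ℤ) ≤ (M : ℤ) * ((n - (k+1) : ℕ) : ℤ) := by
          rw [← h2]; exact_mod_cast h1
      _ = (M : ℤ) * ((n : ℤ) - k - 1) := by
          rw [Nat.cast_sub (by omega : k + 1 ≤ n)]; push_cast; ring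
  -- word length of `g`
  have hwl : (wordLength S g : ℤ) ≤ (k : ℤ) + 1 + (N - G) := by
    have h1 : wordLength S g ≤ wordLength S X + wordLength S (X⁻¹ * g) := by
      have h := wordLength_mul_le' hS X (X⁻¹ * g)
      rwa [show X * (X⁻¹ * g) = g by group] at h
    have h2 : wordLength S X ≤ k + 1 := by
      have := wordLength_le' (l := l.take (k + 1)) (x := X)
        (fun t ht => hlS t (List.mem_of_mem_take ht)) rfl
      calc wordLength S X ≤ (l.take (k + 1)).length := this
        _ ≤ k + 1 := by rw [List.length_take]; omega
    have h3 : (wordLength S (X⁻¹ * g) : ℤ) ≤ N - G := by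
      calc (wordLength S (X⁻¹ * g) : ℤ) ≤ FreeGroup.norm (X⁻¹ * g) := by
            exact_mod_cast wordLength_le_norm hS hA (X⁻¹ * g)
        _ ≤ N - G := hXg
    have h1' : (wordLength S g : ℤ) ≤ wordLength S X + wordLength S (X⁻¹ * g) := by
      exact_mod_cast h1
    have h2' : (wordLength S X : ℤ) ≤ (k : ℤ) + 1 := by exact_mod_cast h2
    linarith
  -- final arithmetic
  set D : ℤ := N - G with hD
  have hMZ : (1 : ℤ) ≤ M := by exact_mod_cast hM1
  have hD2M : D ≤ 2 * M - 1 := by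
    have := hTk1
    linarith
  have hEge : E ≥ D + (2 * M + 1) * M - 2 * M + 1 := by
    rw [hD]
    have : E = N + (G + Y) - T (k + 1) := by linarith [hTk1eq]
    linarith
  have hMn : (M : ℤ) * ((n : ℤ) - k - 1) ≥ D + 2 * M ^ 2 - M + 1 := by
    calc (M : ℤ) * ((n : ℤ) - k - 1) ≥ E := hEbound
      _ ≥ D + (2 * M + 1) * M - 2 * M + 1 := hEge
      _ = D + 2 * M ^ 2 - M + 1 := by ring
  have hfinal : (k : ℤ) + D + 2 ≤ n := by
    have hDM : D * ((M:ℤ) - 1) ≤ (2 * M - 1) * ((M:ℤ) - 1) :=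
      mul_le_mul_of_nonneg_right hD2M (by linarith)
    have hexp2 : (2 * (M:ℤ) - 1) * ((M:ℤ) - 1) = 2 * M ^ 2 - 3 * M + 1 := by ring
    have hexp : (M:ℤ) * ((n:ℤ) - k - 1 - (D + 1))
        = (M:ℤ) * ((n:ℤ) - k - 1) - (D * ((M:ℤ) - 1) + D + M) := by ring
    have hMpos : (0:ℤ) < M := by linarith
    have hQ : (M:ℤ) * 1 ≤ (M:ℤ) * ((n:ℤ) - k - 1 - (D + 1)) := by linarith
    have := (mul_le_mul_iff_right₀ hMpos).mp hQ
    linarith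
  have : (wordLength S g : ℤ) + 1 ≤ (n : ℤ) := by linarith
  have hfin : wordLength S g + 1 ≤ n := by exact_mod_cast this
  rw [← hlen_l]
  exact hfin
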